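/- Let X be a set and T a bounded operator on ℓ²(X) satisfying the uniform finite-approximation property: for all ε > 0 there is M such that for all x ∈ X there exists v ∈ ℓ²(X) with support of size at most M and ‖Tδ_x − v‖ < ε. If S is another bounded operator with the same property, then the product TS also has this property. -/

import Mathlib

noncomputable section
open scoped ENNReal
open Filter

/-- The Hilbert space ℓ²(X). -/
abbrev L2 (X : Type*) := lp (fun _ : X => ℂ) 2

/-- The Dirac function δ_x ∈ ℓ²(X). -/
noncomputable def dirac {X : Type*} (x : X) : L2 X := by
  classical exact lp.single 2 x 1

/-- The uniform finite-approximation property of Proposition 1(2). -/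
def UniformApprox {X : Type*} (T : L2 X →L[ℂ] L2 X) : Prop :=
  ∀ ε : ℝ, 0 < ε → ∃ M : ℕ, ∀ x : X, ∃ v : L2 X,
    (∃ s : Finset X, s.card ≤ M ∧ ∀ y ∉ s, v y = 0) ∧ ‖T (dirac x) - v‖ < ε

lemma norm_dirac {X : Type*} (x : X) : ‖(dirac x : L2 X)‖ = 1 := by
  classical
  simpa [dirac] using lp.norm_single (p := 2) (by norm_num) (fun _ : X => (1:ℂ)) x

lemma repr_finsupp {X : Type*} [DecidableEq X] (v : L2 X) (s : Finset X)
    (hv : ∀ y ∉ s, v y = 0) : v = ∑ y ∈ s, (v y) • dirac y := by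
  apply lp.ext
  funext j
  by_cases hj : j ∈ s
  · rw [lp.coeFn_sum, Finset.sum_apply]
    simp [dirac, lp.single_apply, Pi.single_apply, hj]
  · rw [lp.coeFn_sum, Finset.sum_apply]
    simp [dirac, lp.single_apply, Pi.single_apply, hj, hv j hj]

set_option maxHeartbeats 1000000 in
/-- The uniform finite-approximation property is preserved under products:
if T and S both have it, then so does TS. -/
theorem uniformApprox_comp {X : Type*} (T S : L2 X →L[ℂ] L2 X)
    (hT : UniformApprox T) (hS : UniformApprox S) : UniformApprox (T.comp S) := by
  classical
  intro ε hε
  set ε₁ : ℝ := ε / (2 * (‖T‖ + 1)) with hε₁def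
  clear_value ε₁
  have hε₁ : 0 < ε₁ := by rw [hε₁def]; positivity
  obtain ⟨MS, hMS⟩ := hS ε₁ hε₁
  set C : ℝ := ‖S‖ + ε₁ with hCdef
  clear_value C
  have hC : 0 < C := by rw [hCdef]; positivity
  set ε₂ : ℝ := ε / (2 * ((MS : ℝ) * (C + 1) + 1)) with hε₂def
  clear_value ε₂
  have hε₂ : 0 < ε₂ := by rw [hε₂def]; positivity
  obtain ⟨MT, hMT⟩ := hT ε₂ hε₂
  choose w hw hwe using hMT
  choose t ht hts using hw
  refine ⟨MS * MT, fun x => ?_⟩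
  obtain ⟨v, ⟨s, hscard, hssupp⟩, hverr⟩ := hMS x
  refine ⟨∑ y ∈ s, (v y) • w y, ⟨s.biUnion t, ?_, ?_⟩, ?_⟩
  · calc (s.biUnion t).card ≤ ∑ y ∈ s, (t y).card := Finset.card_biUnion_le
      _ ≤ ∑ _y ∈ s, MT := Finset.sum_le_sum (fun y _ => ht y)
      _ = s.card * MT := by simp [Finset.sum_const, mul_comm]
      _ ≤ MS * MT := Nat.mul_le_mul_right _ hscard
  · intro z hz
    have : ∀ y ∈ s, (v y • w y) z = 0 := by
      intro y hy
      have hzt : z ∉ t y := fun h => hz (Finset.mem_biUnion.2 ⟨y, hy, h⟩)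
      simp [lp.coeFn_smul, hts y z hzt]
    simp only [lp.coeFn_sum, Finset.sum_apply]
    exact Finset.sum_eq_zero this
  · have hv_norm : ‖v‖ ≤ C := by
      have h1 : ‖v‖ ≤ ‖S (dirac x) - v‖ + ‖S (dirac x)‖ := by
        have h := norm_le_insert' v (S (dirac x))
        rw [norm_sub_rev] at h
        linarith
      have h2 : ‖S (dirac x)‖ ≤ ‖S‖ := by
        have := S.le_opNorm (dirac x)
        rw [norm_dirac, mul_one] at this
        exact this
      calc ‖v‖ ≤ ‖S (dirac x) - v‖ + ‖S (dirac x)‖ := h1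
        _ ≤ ε₁ + ‖S‖ := add_le_add hverr.le h2
        _ = C := by rw [hCdef]; ring
    have hTv : T v = ∑ y ∈ s, (v y) • T (dirac y) := by
      conv_lhs => rw [repr_finsupp v s hssupp]
      rw [map_sum]
      exact Finset.sum_congr rfl fun y _ => map_smul T _ _
    have key : ‖T.comp S (dirac x) - ∑ y ∈ s, (v y) • w y‖ ≤
        ‖T‖ * ε₁ + (MS : ℝ) * C * ε₂ := by
      have e1 : T.comp S (dirac x) - ∑ y ∈ s, (v y) • w y =
          T (S (dirac x) - v) + ∑ y ∈ s, (v y) • (T (dirac y) - w y) := by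
        simp only [ContinuousLinearMap.comp_apply, map_sub, hTv, smul_sub,
          Finset.sum_sub_distrib]
        abel
      rw [e1]
      refine (norm_add_le _ _).trans (add_le_add ?_ ?_)
      · calc ‖T (S (dirac x) - v)‖ ≤ ‖T‖ * ‖S (dirac x) - v‖ := T.le_opNorm _
          _ ≤ ‖T‖ * ε₁ := by
            exact mul_le_mul_of_nonneg_left hverr.le (norm_nonneg T)
      · calc ‖∑ y ∈ s, (v y) • (T (dirac y) - w y)‖
            ≤ ∑ y ∈ s, ‖(v y) • (T (dirac y) - w y)‖ := norm_sum_le _ _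
          _ ≤ ∑ _y ∈ s, C * ε₂ := by
              refine Finset.sum_le_sum (fun y _ => ?_)
              rw [norm_smul]
              have hvy : ‖v y‖ ≤ C :=
                (lp.norm_apply_le_norm (by norm_num) v y).trans hv_norm
              exact mul_le_mul hvy (hwe y).le (norm_nonneg _) hC.le
          _ = s.card * (C * ε₂) := by simp [Finset.sum_const]
          _ ≤ MS * (C * ε₂) := by
              have := mul_le_mul_of_nonneg_right
                (show (s.card : ℝ) ≤ MS by exact_mod_cast hscard)
                (by positivity : (0:ℝ) ≤ C * ε₂)
              linarith
          _ = (MS : ℝ) * C * ε₂ := by ring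
    have h0T : (0:ℝ) < ‖T‖ + 1 := by positivity
    have h0S : (0:ℝ) < (MS : ℝ) * (C + 1) + 1 := by positivity
    have hkey1 : (‖T‖ + 1) * ε₁ = ε / 2 := by
      rw [hε₁def, ← div_div, mul_comm, div_mul_cancel₀ _ h0T.ne']
    have hkey2 : ((MS : ℝ) * (C + 1) + 1) * ε₂ = ε / 2 := by
      rw [hε₂def, ← div_div, mul_comm, div_mul_cancel₀ _ h0S.ne']
    have hMS0 : (0:ℝ) ≤ (MS : ℝ) := Nat.cast_nonneg _
    have h1 : ‖T‖ * ε₁ < ε / 2 := by nlinarith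
    have h2 : (MS : ℝ) * C * ε₂ < ε / 2 := by nlinarith
    exact key.trans_lt (by linarith)
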